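/- In any k-tree T (with k ≥ 2) and any node u with degree d(u) ≥ k, the number M(u) of edges among the neighbours of u equals binom(k-1,2) + (k-1)(d(u)-k+1), and consequently the local clustering coefficient of u equals C_T(u) = 2(k-1)/d(u) - (k-1)(k-2)/(d(u)(d(u)-1)). -/

import Mathlib

/-- Rooted `k`-trees on vertex set a finite subset of `ℕ`:
either a `k`-clique, or obtained by attaching a new node `u` to all vertices of an
existing `k`-clique `c`. -/
inductive IsKTree (k : ℕ) : Finset ℕ → SimpleGraph ℕ → Prop
  | base (s : Finset ℕ) (hs : s.card = k) :
      IsKTree k s (SimpleGraph.fromRel (fun a b => a ∈ s ∧ b ∈ s))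
  | extend (s : Finset ℕ) (G : SimpleGraph ℕ) (c : Finset ℕ) (u : ℕ)
      (hG : IsKTree k s G) (hc : c ⊆ s) (hcard : c.card = k)
      (hclique : ∀ a ∈ c, ∀ b ∈ c, a ≠ b → G.Adj a b) (hu : u ∉ s) :
      IsKTree k (insert u s)
        (G ⊔ SimpleGraph.fromRel (fun a b => (a = u ∧ b ∈ c) ∨ (b = u ∧ a ∈ c)))

/-- The number `M(u)` of edges of `G` both of whose endpoints are neighbours of `u`. -/
noncomputable def Medges (G : SimpleGraph ℕ) (u : ℕ) : ℕ :=
  (G.edgeSet ∩ {e : Sym2 ℕ | ∀ v ∈ e, G.Adj u v}).ncard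

open SimpleGraph Set

lemma clique_sym2_eq (t : Finset ℕ) :
    {e : Sym2 ℕ | ¬ e.IsDiag ∧ ∀ v ∈ e, v ∈ t} = ↑(t.offDiag.image Sym2.mk.uncurry) := by
  ext e
  induction e using Sym2.inductionOn with
  | hf a b =>
    simp only [Set.mem_setOf_eq, Finset.coe_image, Set.mem_image, Finset.mem_coe,
      Finset.mem_offDiag, Sym2.isDiag_iff_proj_eq, Sym2.mem_iff]
    constructor
    · rintro ⟨hne, h⟩
      exact ⟨(a, b), ⟨h a (Or.inl rfl), h b (Or.inr rfl), hne⟩, rfl⟩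
    · rintro ⟨⟨x, y⟩, ⟨hx, hy, hxy⟩, h⟩
      change s(x, y) = s(a, b) at h
      rw [Sym2.eq_iff] at h
      rcases h with ⟨rfl, rfl⟩ | ⟨rfl, rfl⟩
      · exact ⟨hxy, by rintro v (rfl | rfl) <;> assumption⟩
      · exact ⟨Ne.symm hxy, by rintro v (rfl | rfl) <;> assumption⟩

lemma clique_sym2_ncard (t : Finset ℕ) :
    {e : Sym2 ℕ | ¬ e.IsDiag ∧ ∀ v ∈ e, v ∈ t}.ncard = t.card.choose 2 := by
  rw [clique_sym2_eq, Set.ncard_coe_finset, Sym2.card_image_offDiag]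

lemma mem_MSet_iff (G : SimpleGraph ℕ) (u a b : ℕ) :
    s(a,b) ∈ G.edgeSet ∩ {e : Sym2 ℕ | ∀ v ∈ e, G.Adj u v} ↔
      G.Adj a b ∧ G.Adj u a ∧ G.Adj u b := by
  constructor
  · rintro ⟨he, hf⟩
    exact ⟨he, hf a (by simp), hf b (by simp)⟩
  · rintro ⟨he, ha, hb⟩
    refine ⟨he, ?_⟩
    intro v hv
    rw [Sym2.mem_iff] at hv
    rcases hv with rfl | rfl <;> assumption

lemma ktree_inv (k : ℕ) (hk : 2 ≤ k) (s : Finset ℕ) (G : SimpleGraph ℕ)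
    (h : IsKTree k s G) :
    (∀ a b, G.Adj a b → a ∈ s ∧ b ∈ s) ∧
    (∀ u ∈ s, (G.neighborSet u).Finite ∧ k - 1 ≤ (G.neighborSet u).ncard ∧
      Medges G u = Nat.choose (k - 1) 2 + (k - 1) * ((G.neighborSet u).ncard - (k - 1))) := by
  induction h with
  | base s hs =>
    constructor
    · intro a b hab
      simp only [fromRel_adj] at hab
      tauto
    · intro u hu
      have hN : (SimpleGraph.fromRel (fun a b => a ∈ s ∧ b ∈ s)).neighborSet u
          = ↑(s.erase u) := by
        ext v
        simp only [mem_neighborSet, fromRel_adj, Finset.coe_erase, Set.mem_diff,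
          Finset.mem_coe, Set.mem_singleton_iff]
        constructor
        · rintro ⟨hne, h | h⟩
          · exact ⟨h.2, fun hv => hne hv.symm⟩
          · exact ⟨h.1, fun hv => hne hv.symm⟩
        · rintro ⟨hv, hne⟩
          exact ⟨fun h => hne h.symm, Or.inl ⟨hu, hv⟩⟩
      have hNcard : ((SimpleGraph.fromRel (fun a b => a ∈ s ∧ b ∈ s)).neighborSet u).ncard
          = k - 1 := by
        rw [hN, Set.ncard_coe_finset, Finset.card_erase_of_mem hu, hs]
      have hM : Medges (SimpleGraph.fromRel (fun a b => a ∈ s ∧ b ∈ s)) u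
          = (k - 1).choose 2 := by
        rw [Medges]
        rw [show (SimpleGraph.fromRel (fun a b => a ∈ s ∧ b ∈ s)).edgeSet
              ∩ {e : Sym2 ℕ | ∀ v ∈ e, (SimpleGraph.fromRel (fun a b => a ∈ s ∧ b ∈ s)).Adj u v}
            = {e : Sym2 ℕ | ¬ e.IsDiag ∧ ∀ v ∈ e, v ∈ s.erase u} from ?_]
        · rw [clique_sym2_ncard, Finset.card_erase_of_mem hu, hs]
        ext e
        induction e using Sym2.inductionOn with
        | hf a b =>
          rw [mem_MSet_iff]
          simp only [fromRel_adj, Set.mem_setOf_eq, Sym2.isDiag_iff_proj_eq, Sym2.mem_iff,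
            Finset.mem_erase]
          constructor
          · rintro ⟨⟨hab, h1⟩, ⟨hua, h2⟩, ⟨hub, h3⟩⟩
            refine ⟨hab, ?_⟩
            rintro v (rfl | rfl)
            · exact ⟨fun h => hua h.symm, by tauto⟩
            · exact ⟨fun h => hub h.symm, by tauto⟩
          · rintro ⟨hab, h⟩
            obtain ⟨ha, ha'⟩ := h a (Or.inl rfl)
            obtain ⟨hb, hb'⟩ := h b (Or.inr rfl)
            exact ⟨⟨hab, Or.inl ⟨ha', hb'⟩⟩, ⟨fun h => ha h.symm, Or.inl ⟨hu, ha'⟩⟩,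
              ⟨fun h => hb h.symm, Or.inl ⟨hu, hb'⟩⟩⟩
      refine ⟨?_, ?_, ?_⟩
      · rw [hN]; exact (s.erase u).finite_toSet
      · omega
      · rw [hM, hNcard]; simp
  | extend s G c w hG hc hcard hclique hw ih =>
    obtain ⟨hsupp, hmain⟩ := ih
    have hwc : w ∉ c := fun h => hw (hc h)
    set G' : SimpleGraph ℕ :=
      G ⊔ SimpleGraph.fromRel (fun a b => (a = w ∧ b ∈ c) ∨ (b = w ∧ a ∈ c)) with hG'
    have hadj : ∀ a b : ℕ, G'.Adj a b ↔
        G.Adj a b ∨ (a ≠ b ∧ ((a = w ∧ b ∈ c) ∨ (b = w ∧ a ∈ c))) := by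
      intro a b
      rw [hG']
      simp only [SimpleGraph.sup_adj, SimpleGraph.fromRel_adj]
      tauto
    have hsupp' : ∀ a b : ℕ, G'.Adj a b → a ∈ insert w s ∧ b ∈ insert w s := by
      intro a b hab
      rw [hadj] at hab
      rcases hab with h | ⟨hne, ⟨rfl, hb⟩ | ⟨rfl, ha⟩⟩
      · exact ⟨Finset.mem_insert_of_mem (hsupp a b h).1,
          Finset.mem_insert_of_mem (hsupp a b h).2⟩
      · exact ⟨Finset.mem_insert_self _ _, Finset.mem_insert_of_mem (hc hb)⟩
      · exact ⟨Finset.mem_insert_of_mem (hc ha), Finset.mem_insert_self _ _⟩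
    refine ⟨hsupp', ?_⟩
    intro u hu
    rcases Finset.mem_insert.1 hu with rfl | hus
    · -- the new vertex
      have hadjw : ∀ v, G'.Adj u v ↔ v ∈ c := by
        intro v
        rw [hadj]
        constructor
        · rintro (h | ⟨hne, ⟨-, hv⟩ | ⟨rfl, hv⟩⟩)
          · exact absurd (hsupp _ _ h).1 hw
          · exact hv
          · exact absurd hv hwc
        · intro hv
          exact Or.inr ⟨by rintro rfl; exact hwc hv, Or.inl ⟨rfl, hv⟩⟩
      have hNw : G'.neighborSet u = ↑c := by
        ext v
        rw [SimpleGraph.mem_neighborSet, hadjw, Finset.mem_coe]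
      have hNwcard : (G'.neighborSet u).ncard = k := by
        rw [hNw, Set.ncard_coe_finset, hcard]
      have hMw : Medges G' u = k.choose 2 := by
        rw [Medges]
        rw [show G'.edgeSet ∩ {e : Sym2 ℕ | ∀ v ∈ e, G'.Adj u v}
            = {e : Sym2 ℕ | ¬ e.IsDiag ∧ ∀ v ∈ e, v ∈ c} from ?_]
        · rw [clique_sym2_ncard, hcard]
        ext e
        induction e using Sym2.inductionOn with
        | hf a b =>
          rw [mem_MSet_iff]
          simp only [Set.mem_setOf_eq, Sym2.isDiag_iff_proj_eq, Sym2.mem_iff]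
          constructor
          · rintro ⟨he, ha, hb⟩
            refine ⟨he.ne, ?_⟩
            rintro v (rfl | rfl)
            · exact (hadjw v).1 ha
            · exact (hadjw v).1 hb
          · rintro ⟨hne, h⟩
            have ha := h a (Or.inl rfl)
            have hb := h b (Or.inr rfl)
            refine ⟨(hadj a b).2 (Or.inl (hclique a ha b hb hne)),
              (hadjw a).2 ha, (hadjw b).2 hb⟩
      refine ⟨by rw [hNw]; exact c.finite_toSet, by omega, ?_⟩
      rw [hMw, hNwcard]
      have h1 : k - (k - 1) = 1 := by omega
      rw [h1, mul_one]
      conv_lhs => rw [show k = (k - 1) + 1 from by omega]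
      rw [Nat.choose_succ_succ, Nat.choose_one_right]
      exact add_comm _ _
    · -- an old vertex
      have hune : u ≠ w := fun h => hw (h ▸ hus)
      obtain ⟨hfin, hcardge, hM⟩ := hmain u hus
      have hMfinset : (G.edgeSet ∩ {e : Sym2 ℕ | ∀ v ∈ e, G.Adj u v}).Finite := by
        apply Set.Finite.subset (s.offDiag.image Sym2.mk.uncurry).finite_toSet
        rw [← clique_sym2_eq]
        rintro e ⟨he, -⟩
        refine ⟨SimpleGraph.not_isDiag_of_mem_edgeSet G he, ?_⟩
        intro v hv
        obtain ⟨b, rfl⟩ := Sym2.mem_iff_exists.1 hv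
        exact (hsupp v b ((SimpleGraph.mem_edgeSet G).1 he)).1
      by_cases huc : u ∈ c
      · -- u is in the attachment clique
        have hadjU : ∀ v, G'.Adj u v ↔ G.Adj u v ∨ v = w := by
          intro v
          rw [hadj]
          constructor
          · rintro (h | ⟨hne, ⟨h1, -⟩ | ⟨rfl, -⟩⟩)
            · exact Or.inl h
            · exact absurd h1 hune
            · exact Or.inr rfl
          · rintro (h | rfl)
            · exact Or.inl h
            · exact Or.inr ⟨hune, Or.inr ⟨rfl, huc⟩⟩
        have hN' : G'.neighborSet u = insert w (G.neighborSet u) := by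
          ext v
          rw [SimpleGraph.mem_neighborSet, hadjU]
          simp only [Set.mem_insert_iff, SimpleGraph.mem_neighborSet]
          tauto
        have hwN : w ∉ G.neighborSet u := fun h => hw (hsupp u w h).2
        have hNcard' : (G'.neighborSet u).ncard = (G.neighborSet u).ncard + 1 := by
          rw [hN', Set.ncard_insert_of_notMem hwN hfin]
        have hseteq : G'.edgeSet ∩ {e : Sym2 ℕ | ∀ v ∈ e, G'.Adj u v}
            = (G.edgeSet ∩ {e : Sym2 ℕ | ∀ v ∈ e, G.Adj u v})
              ∪ ((fun x => s(w, x)) '' ↑(c.erase u)) := by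
          ext e
          induction e using Sym2.inductionOn with
          | hf a b =>
            rw [mem_MSet_iff]
            constructor
            · rintro ⟨he, ha, hb⟩
              rw [hadj] at he
              rcases he with h | ⟨hne, ⟨haw', hbc⟩ | ⟨hbw', hac⟩⟩
              · -- an old edge
                left
                have has : a ∈ s := (hsupp a b h).1
                have hbs : b ∈ s := (hsupp a b h).2
                have haw : a ≠ w := fun hh => hw (hh ▸ has)
                have hbw : b ≠ w := fun hh => hw (hh ▸ hbs)
                rw [hadjU] at ha hb
                rcases ha with ha | haw2
                rcases hb with hb | hbw2
                · exact (mem_MSet_iff G u a b).2 ⟨h, ha, hb⟩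
                · exact absurd hbw2 hbw
                · exact absurd haw2 haw
              · -- new edge s(w, b)
                right
                rw [hadjU] at hb
                have hbw : b ≠ w := by intro hh; rw [hh] at hbc; exact hwc hbc
                rcases hb with hb | hbw2
                · exact ⟨b, Finset.mem_coe.2 (Finset.mem_erase.2 ⟨hb.ne', hbc⟩), by rw [haw']⟩
                · exact absurd hbw2 hbw
              · -- new edge s(a, w)
                right
                rw [hadjU] at ha
                have haw : a ≠ w := by intro hh; rw [hh] at hac; exact hwc hac
                rcases ha with ha | haw2
                · refine ⟨a, Finset.mem_coe.2 (Finset.mem_erase.2 ⟨ha.ne', hac⟩), ?_⟩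
                  rw [hbw']
                  exact Sym2.eq_swap
                · exact absurd haw2 haw
            · rintro (⟨he, hf⟩ | ⟨x, hx, hxe⟩)
              · refine ⟨(hadj a b).2 (Or.inl he), ?_, ?_⟩
                · exact (hadjU a).2 (Or.inl (hf a (Sym2.mem_mk_left a b)))
                · exact (hadjU b).2 (Or.inl (hf b (Sym2.mem_mk_right a b)))
              · rw [Finset.mem_coe, Finset.mem_erase] at hx
                obtain ⟨hxu, hxc⟩ := hx
                have hxw : x ≠ w := fun hh => hwc (hh ▸ hxc)
                have h1 : G'.Adj w x :=
                  (hadj w x).2 (Or.inr ⟨fun hh => hxw hh.symm, Or.inl ⟨rfl, hxc⟩⟩)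
                have h2 : G'.Adj u w := (hadjU w).2 (Or.inr rfl)
                have h3 : G'.Adj u x := (hadjU x).2 (Or.inl (hclique u huc x hxc (fun hh => hxu hh.symm)))
                rw [Sym2.eq_iff] at hxe
                rcases hxe with ⟨rfl, rfl⟩ | ⟨rfl, rfl⟩
                · exact ⟨h1, h2, h3⟩
                · exact ⟨h1.symm, h3, h2⟩
        have hdisj : Disjoint (G.edgeSet ∩ {e : Sym2 ℕ | ∀ v ∈ e, G.Adj u v})
            ((fun x => s(w, x)) '' ↑(c.erase u)) := by
          rw [Set.disjoint_left]
          rintro e ⟨he, -⟩ ⟨x, hx, rfl⟩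
          exact hw (hsupp w x ((SimpleGraph.mem_edgeSet G).1 he)).1
        have himfin : ((fun x => s(w, x)) '' ↑(c.erase u)).Finite :=
          (c.erase u).finite_toSet.image _
        have himcard : ((fun x => s(w, x)) '' ↑(c.erase u)).ncard = k - 1 := by
          rw [Set.ncard_image_of_injOn, Set.ncard_coe_finset,
            Finset.card_erase_of_mem huc, hcard]
          intro x hx y hy hxy
          rw [Finset.mem_coe, Finset.mem_erase] at hx
          simp only [Sym2.eq_iff] at hxy
          rcases hxy with ⟨-, h⟩ | ⟨h1, h2⟩
          · exact h
          · rw [h2] at hx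
            exact absurd hx.2 hwc
        have hMval : Medges G' u = Medges G u + (k - 1) := by
          rw [Medges, hseteq, Set.ncard_union_eq hdisj hMfinset himfin, himcard, Medges]
        refine ⟨?_, by omega, ?_⟩
        · rw [hN']
          exact (hfin.insert w)
        · rw [hMval, hNcard', hM]
          have h2 : (G.neighborSet u).ncard + 1 - (k - 1)
              = ((G.neighborSet u).ncard - (k - 1)) + 1 := by omega
          rw [h2, Nat.mul_add, Nat.mul_one]
          ring
      · -- u not in the attachment clique
        have hadjU : ∀ v, G'.Adj u v ↔ G.Adj u v := by
          intro v
          rw [hadj]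
          constructor
          · rintro (h | ⟨hne, ⟨h1, -⟩ | ⟨-, h2⟩⟩)
            · exact h
            · exact absurd h1 hune
            · exact absurd h2 huc
          · exact fun h => Or.inl h
        have hN' : G'.neighborSet u = G.neighborSet u := by
          ext v
          rw [SimpleGraph.mem_neighborSet, hadjU, SimpleGraph.mem_neighborSet]
        have hseteq : G'.edgeSet ∩ {e : Sym2 ℕ | ∀ v ∈ e, G'.Adj u v}
            = G.edgeSet ∩ {e : Sym2 ℕ | ∀ v ∈ e, G.Adj u v} := by
          ext e
          induction e using Sym2.inductionOn with
          | hf a b =>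
            rw [mem_MSet_iff, mem_MSet_iff]
            constructor
            · rintro ⟨he, ha, hb⟩
              rw [hadjU] at ha hb
              have has : a ∈ s := (hsupp u a ha).2
              have hbs : b ∈ s := (hsupp u b hb).2
              have haw : a ≠ w := fun hh => hw (hh ▸ has)
              have hbw : b ≠ w := fun hh => hw (hh ▸ hbs)
              rw [hadj] at he
              rcases he with h | ⟨-, ⟨h1, -⟩ | ⟨h2, -⟩⟩
              · exact ⟨h, ha, hb⟩
              · exact absurd h1 haw
              · exact absurd h2 hbw
            · rintro ⟨he, ha, hb⟩
              exact ⟨(hadj a b).2 (Or.inl he), (hadjU a).2 ha, (hadjU b).2 hb⟩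
        refine ⟨by rw [hN']; exact hfin, by rw [hN']; omega, ?_⟩
        rw [Medges, hseteq, hN']
        exact hM


/-- In any `k`-tree (`k ≥ 2`), for a node `u` of degree `d(u) ≥ k`,
`M(u) = binom(k-1, 2) + (k-1)(d(u)-k+1)` and consequently the local clustering
coefficient equals `2(k-1)/d(u) - (k-1)(k-2)/(d(u)(d(u)-1))`. -/
theorem ktree_clustering (k : ℕ) (hk : 2 ≤ k) (s : Finset ℕ) (G : SimpleGraph ℕ)
    (hG : IsKTree k s G) (u : ℕ) (hu : u ∈ s) (hd : k ≤ (G.neighborSet u).ncard) :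
    Medges G u = Nat.choose (k - 1) 2 + (k - 1) * ((G.neighborSet u).ncard - k + 1) ∧
    (Medges G u : ℝ) / (Nat.choose ((G.neighborSet u).ncard) 2 : ℝ)
      = 2 * ((k : ℝ) - 1) / ((G.neighborSet u).ncard : ℝ)
        - ((k : ℝ) - 1) * ((k : ℝ) - 2)
          / (((G.neighborSet u).ncard : ℝ) * (((G.neighborSet u).ncard : ℝ) - 1)) := by
  obtain ⟨-, hmain⟩ := ktree_inv k hk s G hG
  obtain ⟨hfin, hge, hM⟩ := hmain u hu
  have h1 : Medges G u
      = Nat.choose (k - 1) 2 + (k - 1) * ((G.neighborSet u).ncard - k + 1) := by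
    rw [hM, show (G.neighborSet u).ncard - (k - 1) = (G.neighborSet u).ncard - k + 1 from
      by omega]
  refine ⟨h1, ?_⟩
  obtain ⟨K, rfl⟩ : ∃ K, k = K + 2 := ⟨k - 2, by omega⟩
  obtain ⟨D, hD⟩ : ∃ D, (G.neighborSet u).ncard = D + (K + 2) :=
    ⟨(G.neighborSet u).ncard - (K + 2), by omega⟩
  rw [h1, hD]
  rw [show K + 2 - 1 = K + 1 from by omega,
    show D + (K + 2) - (K + 2) + 1 = D + 1 from by omega]
  rw [Nat.cast_add, Nat.cast_mul, Nat.cast_choose_two, Nat.cast_choose_two]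
  push_cast
  have hp1 : ((D : ℝ) + (K + 2)) ≠ 0 := by positivity
  have hp2 : ((D : ℝ) + (K + 2)) - 1 ≠ 0 := by
    have : (0:ℝ) ≤ (D:ℝ) := by positivity
    have : (0:ℝ) ≤ (K:ℝ) := by positivity
    nlinarith
  field_simp
  ring
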